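/- There exists an absolute constant κ > 0 such that for every prime p and every set A ⊆ 𝔽_p^*, writing f(x,y) = x(x + y), one has max( |f(A,A)|, |A·A| ) ≥ κ · min( |A|² / √p, √(p·|A|) ). -/

import Mathlib

open Pointwise Finset

set_option linter.unusedSectionVars false

namespace Stmt6Aux

section
variable {p : ℕ} [Fact p.Prime]

def nn (A : Finset (ZMod p)) (m k : ZMod p) : ℕ :=
  ∑ x ∈ A, if m * x + k ∈ A then 1 else 0

lemma nn_le (A : Finset (ZMod p)) (m k : ZMod p) : nn A m k ≤ A.card := by
  unfold nn
  calc ∑ x ∈ A, (if m * x + k ∈ A then 1 else 0) ≤ ∑ x ∈ A, 1 := by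
        apply Finset.sum_le_sum; intro i _; split <;> simp
    _ = A.card := by simp

lemma sum_ite_shift (A : Finset (ZMod p)) (v : ZMod p) :
    (∑ k : ZMod p, if v + k ∈ A then (1:ℕ) else 0) = A.card := by
  rw [Fintype.sum_bijective (v + ·) (Equiv.addLeft v).bijective _
    (fun y => if y ∈ A then (1:ℕ) else 0) (fun x => rfl)]
  simp [Finset.sum_ite_mem]

lemma sum_nn (A : Finset (ZMod p)) :
    (∑ m : ZMod p, ∑ k : ZMod p, nn A m k) = p * A.card ^ 2 := by
  have h : ∀ m : ZMod p, (∑ k : ZMod p, nn A m k) = A.card ^ 2 := by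
    intro m
    unfold nn
    rw [Finset.sum_comm, Finset.sum_congr rfl (fun x _ => sum_ite_shift A (m * x))]
    simp [sq]
  rw [Finset.sum_congr rfl (fun m _ => h m)]
  simp [ZMod.card]

/-- pair count -/
def cc (A : Finset (ZMod p)) (x x' : ZMod p) : ℕ :=
  ∑ m : ZMod p, ∑ k : ZMod p,
    (if m * x + k ∈ A then 1 else 0) * (if m * x' + k ∈ A then 1 else 0)

lemma cc_diag (A : Finset (ZMod p)) (x : ZMod p) : cc A x x = p * A.card := by
  unfold cc
  have h1 : ∀ m k : ZMod p, (if m * x + k ∈ A then (1:ℕ) else 0) * (if m * x + k ∈ A then 1 else 0)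
      = (if m * x + k ∈ A then 1 else 0) := by intro m k; split <;> simp
  calc (∑ m : ZMod p, ∑ k : ZMod p, (if m * x + k ∈ A then (1:ℕ) else 0) * (if m * x + k ∈ A then 1 else 0))
      = ∑ m : ZMod p, ∑ k : ZMod p, (if m * x + k ∈ A then (1:ℕ) else 0) := by
        exact Finset.sum_congr rfl fun m _ => Finset.sum_congr rfl fun k _ => h1 m k
    _ = ∑ _m : ZMod p, A.card := Finset.sum_congr rfl fun m _ => sum_ite_shift A (m * x)
    _ = p * A.card := by simp [ZMod.card]

/-- the shear equivalence used for off-diagonal pairs -/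
noncomputable def shear (x x' : ZMod p) (h : x ≠ x') : (ZMod p × ZMod p) ≃ (ZMod p × ZMod p) where
  toFun q := (q.1 * x + q.2, q.1 * x' + q.2)
  invFun q := ((q.1 - q.2) * (x - x')⁻¹, q.1 - (q.1 - q.2) * (x - x')⁻¹ * x)
  left_inv := by
    intro q
    have hx : x - x' ≠ 0 := sub_ne_zero.mpr h
    have hm : (q.1 * x + q.2 - (q.1 * x' + q.2)) * (x - x')⁻¹ = q.1 := by
      field_simp; ring
    ext
    · simpa using hm
    · simp only; rw [hm]; ring
  right_inv := by
    intro q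
    have hx : x - x' ≠ 0 := sub_ne_zero.mpr h
    ext
    · simp only; ring
    · simp only
      field_simp
      ring

lemma cc_offdiag (A : Finset (ZMod p)) {x x' : ZMod p} (h : x ≠ x') :
    cc A x x' = A.card ^ 2 := by
  unfold cc
  have h0 : (∑ q : ZMod p × ZMod p, (if q.1 * x + q.2 ∈ A then (1:ℕ) else 0) * (if q.1 * x' + q.2 ∈ A then 1 else 0))
      = ∑ m : ZMod p, ∑ k : ZMod p, (if m * x + k ∈ A then (1:ℕ) else 0) * (if m * x' + k ∈ A then 1 else 0) :=
    Fintype.sum_prod_type _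
  rw [← h0]
  have h2 : (∑ q : ZMod p × ZMod p, (if q.1 * x + q.2 ∈ A then (1:ℕ) else 0) * (if q.1 * x' + q.2 ∈ A then 1 else 0))
      = ∑ q : ZMod p × ZMod p, (if q.1 ∈ A then (1:ℕ) else 0) * (if q.2 ∈ A then 1 else 0) :=
    Fintype.sum_bijective (shear x x' h) (shear x x' h).bijective _ _ (fun q => rfl)
  rw [h2]
  have h1 : (∑ q : ZMod p × ZMod p, (if q.1 ∈ A then (1:ℕ) else 0) * (if q.2 ∈ A then 1 else 0))
      = ∑ u : ZMod p, ∑ v : ZMod p, (if u ∈ A then (1:ℕ) else 0) * (if v ∈ A then 1 else 0) :=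
    Fintype.sum_prod_type _
  rw [h1, ← Finset.sum_mul_sum]
  simp [Finset.sum_ite_mem, sq]

lemma sum_nn_sq (A : Finset (ZMod p)) :
    (∑ m : ZMod p, ∑ k : ZMod p, (nn A m k) ^ 2) ≤ p * A.card ^ 2 + A.card ^ 4 := by
  have expand : ∀ m k : ZMod p, (nn A m k) ^ 2
      = ∑ x ∈ A, ∑ x' ∈ A, (if m * x + k ∈ A then 1 else 0) * (if m * x' + k ∈ A then 1 else 0) := by
    intro m k
    rw [sq]
    unfold nn
    rw [Finset.sum_mul_sum]
  have swap : (∑ m : ZMod p, ∑ k : ZMod p, (nn A m k) ^ 2) = ∑ x ∈ A, ∑ x' ∈ A, cc A x x' := by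
    unfold cc
    simp_rw [expand]
    calc (∑ m : ZMod p, ∑ k : ZMod p, ∑ x ∈ A, ∑ x' ∈ A,
            (if m * x + k ∈ A then (1:ℕ) else 0) * (if m * x' + k ∈ A then 1 else 0))
        = ∑ m : ZMod p, ∑ x ∈ A, ∑ k : ZMod p, ∑ x' ∈ A,
            (if m * x + k ∈ A then (1:ℕ) else 0) * (if m * x' + k ∈ A then 1 else 0) :=
          Finset.sum_congr rfl fun m _ => Finset.sum_comm
      _ = ∑ x ∈ A, ∑ m : ZMod p, ∑ k : ZMod p, ∑ x' ∈ A,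
            (if m * x + k ∈ A then (1:ℕ) else 0) * (if m * x' + k ∈ A then 1 else 0) :=
          Finset.sum_comm
      _ = ∑ x ∈ A, ∑ m : ZMod p, ∑ x' ∈ A, ∑ k : ZMod p,
            (if m * x + k ∈ A then (1:ℕ) else 0) * (if m * x' + k ∈ A then 1 else 0) :=
          Finset.sum_congr rfl fun x _ => Finset.sum_congr rfl fun m _ => Finset.sum_comm
      _ = ∑ x ∈ A, ∑ x' ∈ A, ∑ m : ZMod p, ∑ k : ZMod p,
            (if m * x + k ∈ A then (1:ℕ) else 0) * (if m * x' + k ∈ A then 1 else 0) :=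
          Finset.sum_congr rfl fun x _ => Finset.sum_comm
  rw [swap]
  have bound : ∀ x ∈ A, (∑ x' ∈ A, cc A x x') ≤ p * A.card + A.card * A.card ^ 2 := by
    intro x hx
    rw [← Finset.add_sum_erase A _ hx, cc_diag]
    gcongr
    calc (∑ x' ∈ A.erase x, cc A x x') ≤ ∑ x' ∈ A.erase x, A.card ^ 2 := by
          apply Finset.sum_le_sum
          intro x' hx'
          rw [cc_offdiag A (Finset.ne_of_mem_erase hx').symm]
      _ ≤ A.card * A.card ^ 2 := by
          rw [Finset.sum_const, smul_eq_mul]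
          gcongr
          exact Finset.erase_subset _ _
  calc (∑ x ∈ A, ∑ x' ∈ A, cc A x x') ≤ ∑ _x ∈ A, (p * A.card + A.card * A.card ^ 2) :=
        Finset.sum_le_sum bound
    _ = A.card * (p * A.card + A.card * A.card ^ 2) := by rw [Finset.sum_const, smul_eq_mul]
    _ = p * A.card ^ 2 + A.card ^ 4 := by ring

def rr (A : Finset (ZMod p)) (l : ZMod p) : ℕ :=
  ∑ a ∈ A, ∑ b ∈ A, if a * (a + b) = l then 1 else 0

def DD (A : Finset (ZMod p)) : Finset (ZMod p) :=
  Finset.image₂ (fun x y => x * (x + y)) A A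

lemma sum_rr (A : Finset (ZMod p)) : ∑ l ∈ DD A, rr A l = A.card ^ 2 := by
  unfold rr
  calc (∑ l ∈ DD A, ∑ a ∈ A, ∑ b ∈ A, if a * (a + b) = l then (1:ℕ) else 0)
      = ∑ a ∈ A, ∑ l ∈ DD A, ∑ b ∈ A, if a * (a + b) = l then (1:ℕ) else 0 := Finset.sum_comm
    _ = ∑ a ∈ A, ∑ b ∈ A, ∑ l ∈ DD A, if a * (a + b) = l then (1:ℕ) else 0 :=
        Finset.sum_congr rfl fun a _ => Finset.sum_comm
    _ = ∑ a ∈ A, ∑ b ∈ A, 1 := by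
        apply Finset.sum_congr rfl; intro a ha
        apply Finset.sum_congr rfl; intro b hb
        rw [Finset.sum_ite_eq (DD A) (a * (a + b)) (fun _ => 1)]
        simp [DD, Finset.mem_image₂_of_mem ha hb]
    _ = A.card ^ 2 := by simp [sq]

lemma line_iff {a b c d : ZMod p} (hc : c ≠ 0) :
    a * (a + b) = c * (c + d) ↔ d = a * c⁻¹ * b + (a ^ 2 - c ^ 2) * c⁻¹ := by
  constructor
  · intro h
    apply mul_left_cancel₀ hc
    field_simp
    first
      | linear_combination h
      | linear_combination -h
      | linear_combination 2*h
      | linear_combination -2*h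
      | linear_combination c*h
      | linear_combination -c*h
  · intro h; subst h; field_simp; ring

lemma inner_energy (A : Finset (ZMod p)) {u : ZMod p} (v : ZMod p) (hu : u ∈ DD A) :
    (∑ l ∈ DD A, (if u = l then (1:ℕ) else 0) * (if v = l then 1 else 0))
      = if u = v then 1 else 0 := by
  by_cases huv : u = v
  · subst huv
    simp only [if_pos rfl]
    have : ∀ l ∈ DD A, (if u = l then (1:ℕ) else 0) * (if u = l then 1 else 0)
        = if u = l then 1 else 0 := by intro l _; split <;> simp
    rw [Finset.sum_congr rfl this, Finset.sum_ite_eq (DD A) u (fun _ => 1)]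
    simp [hu]
  · rw [if_neg huv]
    apply Finset.sum_eq_zero
    intro l _
    by_cases hul : u = l
    · have : v ≠ l := fun hv => huv (hul.trans hv.symm)
      simp [this]
    · simp [hul]

lemma sum_rr_sq (A : Finset (ZMod p)) (hA : ∀ a ∈ A, a ≠ 0) :
    (∑ l ∈ DD A, (rr A l) ^ 2)
      = ∑ a ∈ A, ∑ c ∈ A, nn A (a * c⁻¹) ((a ^ 2 - c ^ 2) * c⁻¹) := by
  have expand : ∀ l : ZMod p, (rr A l) ^ 2 = ∑ a ∈ A, ∑ c ∈ A, ∑ b ∈ A, ∑ d ∈ A,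
      (if a * (a + b) = l then (1:ℕ) else 0) * (if c * (c + d) = l then 1 else 0) := by
    intro l
    rw [sq]
    unfold rr
    rw [Finset.sum_mul_sum]
    apply Finset.sum_congr rfl; intro a _
    apply Finset.sum_congr rfl; intro c _
    rw [Finset.sum_mul_sum]
  simp_rw [expand]
  calc (∑ l ∈ DD A, ∑ a ∈ A, ∑ c ∈ A, ∑ b ∈ A, ∑ d ∈ A,
          (if a * (a + b) = l then (1:ℕ) else 0) * (if c * (c + d) = l then 1 else 0))
      = ∑ a ∈ A, ∑ l ∈ DD A, ∑ c ∈ A, ∑ b ∈ A, ∑ d ∈ A,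
          (if a * (a + b) = l then (1:ℕ) else 0) * (if c * (c + d) = l then 1 else 0) :=
        Finset.sum_comm
    _ = ∑ a ∈ A, ∑ c ∈ A, ∑ l ∈ DD A, ∑ b ∈ A, ∑ d ∈ A,
          (if a * (a + b) = l then (1:ℕ) else 0) * (if c * (c + d) = l then 1 else 0) :=
        Finset.sum_congr rfl fun _ _ => Finset.sum_comm
    _ = ∑ a ∈ A, ∑ c ∈ A, ∑ b ∈ A, ∑ l ∈ DD A, ∑ d ∈ A,
          (if a * (a + b) = l then (1:ℕ) else 0) * (if c * (c + d) = l then 1 else 0) :=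
        Finset.sum_congr rfl fun _ _ => Finset.sum_congr rfl fun _ _ => Finset.sum_comm
    _ = ∑ a ∈ A, ∑ c ∈ A, ∑ b ∈ A, ∑ d ∈ A, ∑ l ∈ DD A,
          (if a * (a + b) = l then (1:ℕ) else 0) * (if c * (c + d) = l then 1 else 0) :=
        Finset.sum_congr rfl fun _ _ => Finset.sum_congr rfl fun _ _ =>
          Finset.sum_congr rfl fun _ _ => Finset.sum_comm
    _ = ∑ a ∈ A, ∑ c ∈ A, nn A (a * c⁻¹) ((a ^ 2 - c ^ 2) * c⁻¹) := by
        apply Finset.sum_congr rfl; intro a ha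
        apply Finset.sum_congr rfl; intro c hc
        have hc0 : c ≠ 0 := hA c hc
        unfold nn
        apply Finset.sum_congr rfl; intro b hb
        have h1 : (∑ d ∈ A, ∑ l ∈ DD A,
            (if a * (a + b) = l then (1:ℕ) else 0) * (if c * (c + d) = l then 1 else 0))
            = ∑ d ∈ A, if a * (a + b) = c * (c + d) then (1:ℕ) else 0 := by
          apply Finset.sum_congr rfl; intro d _
          exact inner_energy A _ (Finset.mem_image₂_of_mem ha hb)
        rw [h1]
        have h2 : ∀ d ∈ A, (if a * (a + b) = c * (c + d) then (1:ℕ) else 0)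
            = if d = a * c⁻¹ * b + (a ^ 2 - c ^ 2) * c⁻¹ then 1 else 0 := by
          intro d _
          simp only [line_iff hc0]
        rw [Finset.sum_congr rfl h2,
          Finset.sum_ite_eq' A (a * c⁻¹ * b + (a ^ 2 - c ^ 2) * c⁻¹) (fun _ => 1)]
lemma dev_bound (A : Finset (ZMod p)) :
    ∑ q : ZMod p × ZMod p, ((nn A q.1 q.2 : ℝ) - (A.card : ℝ) ^ 2 / p) ^ 2
      ≤ p * (A.card : ℝ) ^ 2 := by
  have hp : (0:ℝ) < p := by
    have := (Fact.out : p.Prime).pos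
    exact_mod_cast this
  set a : ℝ := (A.card : ℝ) with ha
  set t : ℝ := a ^ 2 / p with htdef
  have hS1 : ∑ q : ZMod p × ZMod p, (nn A q.1 q.2 : ℝ) = p * a ^ 2 := by
    have h0 : ∑ q : ZMod p × ZMod p, (nn A q.1 q.2 : ℝ)
        = ∑ m : ZMod p, ∑ k : ZMod p, (nn A m k : ℝ) := Fintype.sum_prod_type _
    rw [h0]
    have h1 : ((∑ m : ZMod p, ∑ k : ZMod p, nn A m k : ℕ) : ℝ) = ((p * A.card ^ 2 : ℕ) : ℝ) := by
      exact_mod_cast congrArg (fun n : ℕ => (n : ℝ)) (sum_nn A)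
    push_cast at h1
    exact h1
  have hS2 : ∑ q : ZMod p × ZMod p, (nn A q.1 q.2 : ℝ) ^ 2 ≤ p * a ^ 2 + a ^ 4 := by
    have h0 : ∑ q : ZMod p × ZMod p, (nn A q.1 q.2 : ℝ) ^ 2
        = ∑ m : ZMod p, ∑ k : ZMod p, (nn A m k : ℝ) ^ 2 := Fintype.sum_prod_type _
    rw [h0]
    have h1 := sum_nn_sq A
    have h2 : ((∑ m : ZMod p, ∑ k : ZMod p, (nn A m k) ^ 2 : ℕ) : ℝ)
        ≤ ((p * A.card ^ 2 + A.card ^ 4 : ℕ) : ℝ) := by exact_mod_cast h1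
    push_cast at h2
    convert h2 using 2 <;> push_cast <;> ring
  have hexp : ∀ q : ZMod p × ZMod p, ((nn A q.1 q.2 : ℝ) - t) ^ 2
      = (nn A q.1 q.2 : ℝ) ^ 2 - 2 * t * (nn A q.1 q.2 : ℝ) + t ^ 2 := fun q => by ring
  rw [Finset.sum_congr rfl fun q _ => hexp q, Finset.sum_add_distrib, Finset.sum_sub_distrib,
    ← Finset.mul_sum, Finset.sum_const, Finset.card_univ, hS1]
  have hcard : (Fintype.card (ZMod p × ZMod p)) = p * p := by
    rw [Fintype.card_prod, ZMod.card]
  rw [hcard]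
  have ht : t * (p : ℝ) = a ^ 2 := div_mul_cancel₀ _ hp.ne'
  have hsmul : ((p * p) • t ^ 2 : ℝ) = (p : ℝ) * p * t ^ 2 := by
    rw [nsmul_eq_mul]; push_cast; ring
  rw [hsmul]
  nlinarith [hS2, sq_nonneg t]

/-- the line-parameter map -/
noncomputable def phi (q : ZMod p × ZMod p) : ZMod p × ZMod p :=
  (q.1 * q.2⁻¹, (q.1 ^ 2 - q.2 ^ 2) * q.2⁻¹)

lemma phi_inj (A : Finset (ZMod p)) (hA : ∀ a ∈ A, a ≠ 0) :
    Set.InjOn phi ((((A ×ˢ A).filter (fun q => q.1 ≠ q.2 ∧ q.1 ≠ -q.2)) : Finset (ZMod p × ZMod p)) : Set (ZMod p × ZMod p)) := by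
  rintro ⟨a, c⟩ hq ⟨a', c'⟩ hq' heq
  simp only [Finset.coe_filter, Set.mem_setOf_eq, Finset.mem_product] at hq hq'
  obtain ⟨⟨haA, hcA⟩, hne1, hne2⟩ := hq
  obtain ⟨⟨haA', hcA'⟩, hne1', hne2'⟩ := hq'
  have hc : c ≠ 0 := hA _ hcA
  have hc' : c' ≠ 0 := hA _ hcA'
  have h1 : a * c⁻¹ = a' * c'⁻¹ := congrArg Prod.fst heq
  have h2 : (a ^ 2 - c ^ 2) * c⁻¹ = (a' ^ 2 - c' ^ 2) * c'⁻¹ := congrArg Prod.snd heq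
  field_simp at h1 h2
  have hsq : a ^ 2 - c ^ 2 ≠ 0 := by
    have f1 : a - c ≠ 0 := sub_ne_zero.mpr hne1
    have f2 : a + c ≠ 0 := by
      intro h
      exact hne2 (by linear_combination h)
    have : (a - c) * (a + c) ≠ 0 := mul_ne_zero f1 f2
    intro h
    exact this (by linear_combination h)
  have key : (a ^ 2 - c ^ 2) * c' * c * (c - c') = 0 := by
    first
      | linear_combination c ^ 2 * h2 - c * (a' * c + a * c') * h1
      | linear_combination c ^ 2 * h2 + c * (a' * c + a * c') * h1
      | linear_combination - c ^ 2 * h2 - c * (a' * c + a * c') * h1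
      | linear_combination - c ^ 2 * h2 + c * (a' * c + a * c') * h1
  have hcc : c = c' := by
    have hnz : (a ^ 2 - c ^ 2) * c' * c ≠ 0 := mul_ne_zero (mul_ne_zero hsq hc') hc
    have := (mul_eq_zero.mp key).resolve_left hnz
    exact sub_eq_zero.mp this
  have haa : a = a' := by
    subst hcc
    exact mul_right_cancel₀ hc (h1.trans (mul_comm _ _))
  simp [haa, hcc]
lemma sqrtp_ge_one : (1 : ℝ) ≤ Real.sqrt p := by
  rw [show (1:ℝ) = Real.sqrt 1 by simp]
  apply Real.sqrt_le_sqrt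
  exact_mod_cast (Fact.out : p.Prime).one_lt.le

lemma EE_bound (A : Finset (ZMod p)) (hA : ∀ a ∈ A, a ≠ 0) :
    ((∑ a ∈ A, ∑ c ∈ A, nn A (a * c⁻¹) ((a ^ 2 - c ^ 2) * c⁻¹) : ℕ) : ℝ)
      ≤ (A.card : ℝ) ^ 4 / p + 3 * Real.sqrt p * (A.card : ℝ) ^ 2 := by
  have hp : (0:ℝ) < p := by exact_mod_cast (Fact.out : p.Prime).pos
  set a : ℝ := (A.card : ℝ) with hadef
  have ha0 : 0 ≤ a := Nat.cast_nonneg _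
  set t : ℝ := a ^ 2 / p with htdef
  have ht0 : 0 ≤ t := by positivity
  -- rewrite as a real sum over the product finset
  have hcast : ((∑ x ∈ A, ∑ c ∈ A, nn A (x * c⁻¹) ((x ^ 2 - c ^ 2) * c⁻¹) : ℕ) : ℝ)
      = ∑ q ∈ A ×ˢ A, (nn A (phi q).1 (phi q).2 : ℝ) := by
    rw [Finset.sum_product]
    push_cast
    rfl
  rw [hcast]
  set S := (A ×ˢ A).filter (fun q : ZMod p × ZMod p => q.1 = q.2 ∨ q.1 = -q.2) with hSdef
  set T := (A ×ˢ A).filter (fun q : ZMod p × ZMod p => ¬(q.1 = q.2 ∨ q.1 = -q.2)) with hTdef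
  have hsplit : ∑ q ∈ A ×ˢ A, (nn A (phi q).1 (phi q).2 : ℝ)
      = (∑ q ∈ S, (nn A (phi q).1 (phi q).2 : ℝ))
        + ∑ q ∈ T, (nn A (phi q).1 (phi q).2 : ℝ) :=
    (Finset.sum_filter_add_sum_filter_not _ _ _).symm
  rw [hsplit]
  -- the S part
  have hScard : S.card ≤ 2 * A.card := by
    have hsub : S ⊆ (A.image fun x => (x, x)) ∪ (A.image fun x => (x, -x)) := by
      intro q hq
      rw [hSdef, Finset.mem_filter, Finset.mem_product] at hq
      obtain ⟨⟨h1, h2⟩, h3 | h3⟩ := hq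
      · apply Finset.mem_union_left
        exact Finset.mem_image.mpr ⟨q.1, h1, by rw [Prod.ext_iff]; exact ⟨rfl, h3⟩⟩
      · apply Finset.mem_union_right
        refine Finset.mem_image.mpr ⟨q.1, h1, ?_⟩
        rw [Prod.ext_iff]
        exact ⟨rfl, by rw [h3]; ring⟩
    calc S.card ≤ _ := Finset.card_le_card hsub
      _ ≤ (A.image fun x => (x, x)).card + (A.image fun x => (x, -x)).card :=
          Finset.card_union_le _ _
      _ ≤ A.card + A.card := Nat.add_le_add (Finset.card_image_le) (Finset.card_image_le)
      _ = 2 * A.card := by ring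
  have hSsum : (∑ q ∈ S, (nn A (phi q).1 (phi q).2 : ℝ)) ≤ 2 * a ^ 2 := by
    calc (∑ q ∈ S, (nn A (phi q).1 (phi q).2 : ℝ)) ≤ ∑ _q ∈ S, a := by
          apply Finset.sum_le_sum
          intro q _
          have h := nn_le A (phi q).1 (phi q).2
          rw [hadef]
          exact_mod_cast h
      _ = S.card * a := by rw [Finset.sum_const, nsmul_eq_mul]
      _ ≤ (2 * A.card : ℕ) * a := by
          apply mul_le_mul_of_nonneg_right _ ha0
          exact_mod_cast hScard
      _ = 2 * a ^ 2 := by push_cast; ring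
  -- the T part
  have hTcard : (T.card : ℝ) ≤ a ^ 2 := by
    have : T.card ≤ (A ×ˢ A).card := Finset.card_le_card (Finset.filter_subset _ _)
    rw [Finset.card_product] at this
    calc (T.card : ℝ) ≤ ((A.card * A.card : ℕ) : ℝ) := by exact_mod_cast this
      _ = a ^ 2 := by push_cast; ring
  have hTsq : ∑ q ∈ T, ((nn A (phi q).1 (phi q).2 : ℝ) - t) ^ 2 ≤ p * a ^ 2 := by
    have h1 : ∑ q ∈ T, ((nn A (phi q).1 (phi q).2 : ℝ) - t) ^ 2
        = ∑ y ∈ T.image phi, ((nn A y.1 y.2 : ℝ) - t) ^ 2 := by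
      rw [Finset.sum_image]
      intro x hx y hy hxy
      have hT' : T = (A ×ˢ A).filter (fun q => q.1 ≠ q.2 ∧ q.1 ≠ -q.2) := by
        rw [hTdef]; congr 1; ext q; tauto
      exact phi_inj A hA (by rw [← hT']; exact_mod_cast hx) (by rw [← hT']; exact_mod_cast hy) hxy
    rw [h1]
    calc ∑ y ∈ T.image phi, ((nn A y.1 y.2 : ℝ) - t) ^ 2
        ≤ ∑ y : ZMod p × ZMod p, ((nn A y.1 y.2 : ℝ) - t) ^ 2 := by
          apply Finset.sum_le_sum_of_subset_of_nonneg (Finset.subset_univ _)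
          intro i _ _
          positivity
      _ ≤ p * a ^ 2 := dev_bound A

  have hTabs : ∑ q ∈ T, |(nn A (phi q).1 (phi q).2 : ℝ) - t| ≤ a ^ 2 * Real.sqrt p := by
    have hCS := Finset.sum_mul_sq_le_sq_mul_sq T (fun _ => (1:ℝ))
      (fun q => |(nn A (phi q).1 (phi q).2 : ℝ) - t|)
    simp only [one_mul, one_pow, sq_abs] at hCS
    have hsum : ∑ q ∈ T, (1:ℝ) = T.card := by simp
    rw [hsum] at hCS
    have h2 : (∑ q ∈ T, |(nn A (phi q).1 (phi q).2 : ℝ) - t|) ^ 2 ≤ a ^ 2 * (p * a ^ 2) := by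
      calc (∑ q ∈ T, |(nn A (phi q).1 (phi q).2 : ℝ) - t|) ^ 2
          ≤ (T.card : ℝ) * ∑ q ∈ T, ((nn A (phi q).1 (phi q).2 : ℝ) - t) ^ 2 := hCS
        _ ≤ a ^ 2 * (p * a ^ 2) := by
            apply mul_le_mul hTcard hTsq _ (by positivity)
            apply Finset.sum_nonneg; intro i _; positivity
    have h3 : (0:ℝ) ≤ ∑ q ∈ T, |(nn A (phi q).1 (phi q).2 : ℝ) - t| :=
      Finset.sum_nonneg fun i _ => abs_nonneg _
    calc ∑ q ∈ T, |(nn A (phi q).1 (phi q).2 : ℝ) - t|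
        = Real.sqrt ((∑ q ∈ T, |(nn A (phi q).1 (phi q).2 : ℝ) - t|) ^ 2) :=
          (Real.sqrt_sq h3).symm
      _ ≤ Real.sqrt (a ^ 2 * (p * a ^ 2)) := Real.sqrt_le_sqrt h2
      _ = a ^ 2 * Real.sqrt p := by
          rw [show a ^ 2 * ((p:ℝ) * a ^ 2) = (a ^ 2) ^ 2 * p by ring,
            Real.sqrt_mul (by positivity), Real.sqrt_sq (by positivity)]
  have hTsum : ∑ q ∈ T, (nn A (phi q).1 (phi q).2 : ℝ) ≤ a ^ 4 / p + a ^ 2 * Real.sqrt p := by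
    have h1 : ∑ q ∈ T, (nn A (phi q).1 (phi q).2 : ℝ)
        = (∑ q ∈ T, ((nn A (phi q).1 (phi q).2 : ℝ) - t)) + T.card * t := by
      rw [Finset.sum_sub_distrib, Finset.sum_const, nsmul_eq_mul]
      ring
    rw [h1]
    have h2 : (∑ q ∈ T, ((nn A (phi q).1 (phi q).2 : ℝ) - t))
        ≤ ∑ q ∈ T, |(nn A (phi q).1 (phi q).2 : ℝ) - t| :=
      Finset.sum_le_sum fun i _ => le_abs_self _
    have h3 : (T.card : ℝ) * t ≤ a ^ 2 * t := mul_le_mul_of_nonneg_right hTcard ht0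
    have h4 : a ^ 2 * t = a ^ 4 / p := by rw [htdef]; ring
    nlinarith [hTabs]
  have final : (∑ q ∈ S, (nn A (phi q).1 (phi q).2 : ℝ))
      + ∑ q ∈ T, (nn A (phi q).1 (phi q).2 : ℝ)
      ≤ a ^ 4 / p + 3 * Real.sqrt p * a ^ 2 := by
    have hs1 := sqrtp_ge_one (p := p)
    nlinarith [hSsum, hTsum, sq_nonneg a]
  exact final
end

end Stmt6Aux

open Stmt6Aux

/-- Corollary: for `f(x,y) = x(x+y)` and any `A ⊆ 𝔽_p^*`,
`max(|f(A,A)|, |A·A|) ≫ min(|A|²/√p, √(p|A|))`. -/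
theorem stmt_6 : ∃ κ : ℝ, 0 < κ ∧ ∀ (p : ℕ), p.Prime →
    ∀ A : Finset (ZMod p), (∀ a ∈ A, a ≠ 0) →
      max ((Finset.image₂ (fun x y => x * (x + y)) A A).card : ℝ) ((A * A).card : ℝ) ≥
        κ * min ((A.card : ℝ) ^ 2 / Real.sqrt p) (Real.sqrt ((p : ℝ) * A.card)) := by
  refine ⟨1/6, by norm_num, ?_⟩
  intro p hp A hA
  haveI : Fact p.Prime := ⟨hp⟩
  by_cases hAe : A = ∅
  · subst hAe
    simp
  -- nonempty case
  have hcard : 0 < A.card := Finset.card_pos.mpr (Finset.nonempty_of_ne_empty hAe)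
  set a : ℝ := (A.card : ℝ) with hadef
  have ha1 : 1 ≤ a := by rw [hadef]; exact_mod_cast hcard
  have ha0 : 0 < a := lt_of_lt_of_le one_pos ha1
  have hpR : (0:ℝ) < p := by exact_mod_cast hp.pos
  have hs0 : 0 < Real.sqrt p := Real.sqrt_pos.mpr hpR
  have hs1 : (1:ℝ) ≤ Real.sqrt p := sqrtp_ge_one
  have hap : a ≤ p := by
    rw [hadef]
    have h1 : A.card ≤ Fintype.card (ZMod p) := Finset.card_le_univ A
    rw [ZMod.card] at h1
    exact_mod_cast h1
  set D : ℝ := ((DD A).card : ℝ) with hDdef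
  have hD0 : 0 ≤ D := Nat.cast_nonneg _
  set E : ℝ := ((∑ x ∈ A, ∑ c ∈ A, nn A (x * c⁻¹) ((x ^ 2 - c ^ 2) * c⁻¹) : ℕ) : ℝ) with hEdef
  -- Cauchy–Schwarz: a^4 ≤ D * E
  have key : a ^ 4 ≤ D * E := by
    have hCS := Finset.sum_mul_sq_le_sq_mul_sq (DD A) (fun _ => (1:ℝ))
      (fun l => (rr A l : ℝ))
    simp only [one_mul, one_pow] at hCS
    have h1 : ∑ l ∈ DD A, (rr A l : ℝ) = a ^ 2 := by
      rw [hadef]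
      rw [← Nat.cast_sum]
      exact_mod_cast congrArg (fun n : ℕ => (n : ℝ)) (sum_rr A)
    have h2 : ∑ l ∈ DD A, (rr A l : ℝ) ^ 2 = E := by
      rw [hEdef]
      push_cast [← sum_rr_sq A hA]
      rfl
    have h3 : ∑ l ∈ DD A, (1:ℝ) = D := by simp [hDdef]
    rw [h1, h2, h3] at hCS
    calc a ^ 4 = (a ^ 2) ^ 2 := by ring
      _ ≤ D * E := hCS
  have hE : E ≤ a ^ 4 / p + 3 * Real.sqrt p * a ^ 2 := EE_bound A hA
  have key2 : a ^ 4 ≤ D * (a ^ 4 / p + 3 * Real.sqrt p * a ^ 2) :=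
    le_trans key (mul_le_mul_of_nonneg_left hE hD0)
  rw [ge_iff_le]
  refine le_trans ?_ (le_max_left _ _)
  by_cases hcase : a ^ 4 / p ≤ 3 * Real.sqrt p * a ^ 2
  · -- D ≥ a^2/(6 √p)
    have h6 : a ^ 4 ≤ D * (6 * Real.sqrt p * a ^ 2) := by nlinarith
    have hDa : a ^ 2 ≤ 6 * D * Real.sqrt p := by
      have := le_of_mul_le_mul_right (by nlinarith : a ^ 2 * a ^ 2 ≤ (6 * D * Real.sqrt p) * a ^ 2)
        (by positivity : (0:ℝ) < a ^ 2)
      exact this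
    have hmin : min (a ^ 2 / Real.sqrt p) (Real.sqrt ((p:ℝ) * a)) ≤ a ^ 2 / Real.sqrt p :=
      min_le_left _ _
    have : a ^ 2 / Real.sqrt p ≤ 6 * D := by
      rw [div_le_iff₀ hs0]
      nlinarith
    calc 1/6 * min (a ^ 2 / Real.sqrt p) (Real.sqrt ((p:ℝ) * a))
        ≤ 1/6 * (a ^ 2 / Real.sqrt p) := by
          apply mul_le_mul_of_nonneg_left hmin (by norm_num)
      _ ≤ D := by linarith
  · -- D ≥ p/2
    push_neg at hcase
    have h2 : a ^ 4 ≤ D * (2 * (a ^ 4 / p)) := by nlinarith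
    have hDp : (p:ℝ) ≤ 2 * D := by
      have ha4 : (0:ℝ) < a ^ 4 / p := by positivity
      have hmm : (p:ℝ) * (a ^ 4 / p) = a ^ 4 := by field_simp
      have := le_of_mul_le_mul_right
        (by nlinarith [hmm] : (p:ℝ) * (a ^ 4 / p) ≤ (2 * D) * (a ^ 4 / p)) ha4
      exact this
    have hmin : min (a ^ 2 / Real.sqrt p) (Real.sqrt ((p:ℝ) * a)) ≤ (p:ℝ) := by
      refine le_trans (min_le_right _ _) ?_
      calc Real.sqrt ((p:ℝ) * a) ≤ Real.sqrt ((p:ℝ) * p) := by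
            apply Real.sqrt_le_sqrt
            nlinarith
        _ = p := Real.sqrt_mul_self hpR.le
    calc 1/6 * min (a ^ 2 / Real.sqrt p) (Real.sqrt ((p:ℝ) * a))
        ≤ 1/6 * (p:ℝ) := by apply mul_le_mul_of_nonneg_left hmin (by norm_num)
      _ ≤ D := by linarith
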